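/- arXiv:math/0301326 — 3 statements merged into one kernel-verified Lean document; each statement's English description precedes it below -/
import Mathlib

section
/- Let (g,σ,B) be an indecomposable solvable symmetric triple with g = h ⊕ m and an adapted decomposition m = z ⊕ W ⊕ z* with maximal center (z = z(g)), and let pr_W denote the projection of m onto W along z ⊕ z*. Suppose the triple is least nilpotent, i.e. the only vector w ∈ W with pr_W(⁅a, ⁅b, w⁆⁆) = 0 for all a,b ∈ z* is w = 0. Then the holonomy algebra h is abelian: ⁅h,h⁆ = 0. -/
lemma one_mem_span_pow_succ {V : Type*} [AddCommGroup V] [Module ℝ V]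
    [FiniteDimensional ℝ V] (A : Module.End ℝ V) (hA : Function.Injective A) :
    (1 : Module.End ℝ V) ∈ Submodule.span ℝ (Set.range fun m : ℕ => A ^ (m + 1)) := by
  set T : Submodule ℝ (Module.End ℝ V) :=
    Submodule.span ℝ (Set.range fun m : ℕ => A ^ (m + 1)) with hT
  have hmul : ∀ x ∈ T, A * x ∈ T := by
    intro x hx
    induction hx using Submodule.span_induction with
    | mem x hx =>
        obtain ⟨m, rfl⟩ := hx
        exact Submodule.subset_span ⟨m + 1, by simp [pow_succ']⟩
    | zero => simpa using T.zero_mem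
    | add x y _ _ hx hy => simpa [mul_add] using T.add_mem hx hy
    | smul r x _ hx => simpa [mul_smul_comm] using T.smul_mem r hx
  let f : T →ₗ[ℝ] T := (LinearMap.mulLeft ℝ A).restrict hmul
  have hAmul : ∀ x y : Module.End ℝ V, A * x = A * y → x = y := by
    intro x y hxy
    ext v
    exact hA (by simpa using congrArg (fun g => g v) hxy)
  have hfinj : Function.Injective f := by
    intro x y hxy
    have : A * (x : Module.End ℝ V) = A * (y : Module.End ℝ V) :=
      congrArg Subtype.val hxy
    exact Subtype.ext (hAmul _ _ this)
  have hfsurj : Function.Surjective f := LinearMap.injective_iff_surjective.mp hfinj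
  have hAT : A ∈ T := Submodule.subset_span ⟨0, pow_one A⟩
  obtain ⟨t, ht⟩ := hfsurj ⟨A, hAT⟩
  have ht' : A * (t : Module.End ℝ V) = A := congrArg Subtype.val ht
  have : (t : Module.End ℝ V) = 1 := hAmul _ _ (by simpa using ht')
  exact this ▸ t.2

/-- A least nilpotent indecomposable solvable symmetric triple with maximal
center has abelian holonomy algebra `h`. -/
theorem holonomy_abelian_of_least_nilpotent
    (L : Type*) [LieRing L] [LieAlgebra ℝ L] [FiniteDimensional ℝ L]
    [LieAlgebra.IsSolvable L]
    (σ : L →ₗ⁅ℝ⁆ L) (hσ : ∀ x, σ (σ x) = x)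
    (H M : Submodule ℝ L)
    (hH : ∀ x, x ∈ H ↔ σ x = x)
    (hM : ∀ x, x ∈ M ↔ σ x = -x)
    (hcompl : IsCompl H M)
    (hHspan : H = Submodule.span ℝ {z : L | ∃ x ∈ M, ∃ y ∈ M, ⁅x, y⁆ = z})
    (B : LinearMap.BilinForm ℝ L)
    (hBnd : B.Nondegenerate)
    (hBsymm : ∀ x y : L, B x y = B y x)
    (hBσ : ∀ x y : L, B (σ x) (σ y) = B x y)
    (hBad : ∀ x y z : L, B ⁅x, y⁆ z = B x ⁅y, z⁆)
    (hindec : ∀ m' : Submodule ℝ L, m' ≤ M →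
      (∀ h ∈ H, ∀ x ∈ m', ⁅h, x⁆ ∈ m') →
      (∀ x ∈ m', (∀ y ∈ m', B x y = 0) → x = 0) →
      m' = ⊥ ∨ m' = M)
    -- adapted decomposition m = z ⊕ W ⊕ z* with maximal center
    (W Zstar : Submodule ℝ L)
    (hWM : W ≤ M) (hZstarM : Zstar ≤ M)
    (hdisj₁ : Disjoint (LieAlgebra.center ℝ L).toSubmodule W)
    (hdisj₂ : Disjoint ((LieAlgebra.center ℝ L).toSubmodule ⊔ W) Zstar)
    (hsum : (LieAlgebra.center ℝ L).toSubmodule ⊔ W ⊔ Zstar = M)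
    (hZiso : ∀ x ∈ LieAlgebra.center ℝ L, ∀ y ∈ LieAlgebra.center ℝ L, B x y = 0)
    (hZstariso : ∀ x ∈ Zstar, ∀ y ∈ Zstar, B x y = 0)
    (hWZ : ∀ w ∈ W, ∀ z ∈ LieAlgebra.center ℝ L, B w z = 0)
    (hWZstar : ∀ w ∈ W, ∀ a ∈ Zstar, B w a = 0)
    (hWpos : ∀ w ∈ W, w ≠ 0 → 0 < B w w)
    (hpair₁ : ∀ a ∈ LieAlgebra.center ℝ L, (∀ b ∈ Zstar, B a b = 0) → a = 0)
    (hpair₂ : ∀ b ∈ Zstar, (∀ a ∈ LieAlgebra.center ℝ L, B a b = 0) → b = 0)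
    (hbr₁ : ∀ h ∈ H, ∀ x ∈ (LieAlgebra.center ℝ L).toSubmodule ⊔ W,
      ⁅h, x⁆ ∈ (LieAlgebra.center ℝ L).toSubmodule)
    (hbr₂ : ∀ h ∈ H, ∀ x ∈ Zstar,
      ⁅h, x⁆ ∈ (LieAlgebra.center ℝ L).toSubmodule ⊔ W)
    -- pr_W : projection of m onto W along z ⊕ z*
    (prW : L →ₗ[ℝ] L)
    (hprW₁ : ∀ x : L, prW x ∈ W)
    (hprW₂ : ∀ w ∈ W, prW w = w)
    (hprW₃ : ∀ z ∈ LieAlgebra.center ℝ L, prW z = 0)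
    (hprW₄ : ∀ a ∈ Zstar, prW a = 0)
    -- least nilpotent
    (hleast : ∀ w ∈ W, (∀ a ∈ Zstar, ∀ b ∈ Zstar, prW ⁅a, ⁅b, w⁆⁆ = 0) → w = 0) :
    ∀ h₁ ∈ H, ∀ h₂ ∈ H, ⁅h₁, h₂⁆ = (0 : L) := by
  classical
  intro h₁ hh₁ h₂ hh₂
  set Z : Submodule ℝ L := (LieAlgebra.center ℝ L).toSubmodule with hZdef
  -- basic facts about the center
  have hZc : ∀ z ∈ Z, ∀ x : L, ⁅x, z⁆ = 0 := by
    intro z hz x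
    exact (LieModule.mem_maxTrivSubmodule ℝ L L z).mp hz x
  have hZc' : ∀ z ∈ Z, ∀ x : L, ⁅z, x⁆ = 0 := by
    intro z hz x
    rw [← lie_skew, hZc z hz x, neg_zero]
  have prWZ : ∀ z ∈ Z, prW z = 0 := fun z hz => hprW₃ z hz
  have hBZW : ∀ z ∈ Z, ∀ w ∈ W, B z w = 0 := fun z hz w hw => by
    rw [hBsymm]; exact hWZ w hw z hz
  -- [M, M] ⊆ H
  have hMM : ∀ x ∈ M, ∀ y ∈ M, ⁅x, y⁆ ∈ H := by
    intro x hx y hy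
    rw [hH, LieHom.map_lie, (hM x).mp hx, (hM y).mp hy, neg_lie, lie_neg, neg_neg]
  -- B (H, M) = 0
  have BHM : ∀ h ∈ H, ∀ m ∈ M, B h m = 0 := by
    intro h hh m hm
    have h1 := hBσ h m
    rw [(hH h).mp hh, (hM m).mp hm, map_neg] at h1
    linarith
  -- decomposition of elements of Z ⊔ W
  have decZW : ∀ u ∈ Z ⊔ W, ∃ z ∈ Z, u = z + prW u ∧ prW u ∈ W := by
    intro u hu
    obtain ⟨z, hz, w, hw, rfl⟩ := Submodule.mem_sup.mp hu
    have : prW (z + w) = w := by rw [map_add, prWZ z hz, hprW₂ w hw, zero_add]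
    exact ⟨z, hz, by rw [this], hprW₁ _⟩
  have BprW : ∀ u ∈ Z ⊔ W, ∀ w' ∈ W, B u w' = B (prW u) w' := by
    intro u hu w' hw'
    obtain ⟨z, hz, hzu, _⟩ := decZW u hu
    conv_lhs => rw [hzu]
    rw [map_add, LinearMap.add_apply, hBZW z hz w' hw', zero_add]
  -- decomposition of M
  have decM : ∀ x ∈ M, ∃ u ∈ Z ⊔ W, ∃ a ∈ Zstar, x = u + a := by
    intro x hx
    rw [← hsum] at hx
    obtain ⟨u, hu, a, ha, rfl⟩ := Submodule.mem_sup.mp hx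
    exact ⟨u, hu, a, ha, rfl⟩
  have hWZW : W ≤ Z ⊔ W := le_sup_right
  -- [W, W] = 0
  have WW : ∀ w ∈ W, ∀ w' ∈ W, ⁅w, w'⁆ = (0 : L) := by
    intro w hw w' hw'
    apply hBnd.1
    intro x
    have hx : x ∈ H ⊔ M := by rw [hcompl.sup_eq_top]; trivial
    obtain ⟨xh, hxh, xm, hxm, rfl⟩ := Submodule.mem_sup.mp hx
    rw [map_add]
    have t1 : B ⁅w, w'⁆ xh = 0 := by
      rw [hBad]
      have : ⁅w', xh⁆ = -⁅xh, w'⁆ := (lie_skew _ _).symm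
      rw [this, map_neg]
      have : B w ⁅xh, w'⁆ = 0 := by
        rw [hBsymm]
        exact hBZW _ (hbr₁ xh hxh w' (hWZW hw')) w hw
      rw [this, neg_zero]
    have t2 : B ⁅w, w'⁆ xm = 0 := BHM _ (hMM w (hWM hw) w' (hWM hw')) xm hxm
    rw [t1, t2, add_zero]
  -- [[H,H], Zstar] ⊆ Z
  have LHH : ∀ g₁ ∈ H, ∀ g₂ ∈ H, ∀ d ∈ Zstar, ⁅⁅g₁, g₂⁆, d⁆ ∈ Z := by
    intro g₁ hg₁ g₂ hg₂ d hd
    rw [lie_lie]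
    exact sub_mem (hbr₁ g₁ hg₁ _ (hbr₂ g₂ hg₂ d hd)) (hbr₁ g₂ hg₂ _ (hbr₂ g₁ hg₁ d hd))
  have prLHH : ∀ g₁ ∈ H, ∀ g₂ ∈ H, ∀ d ∈ Zstar, prW ⁅⁅g₁, g₂⁆, d⁆ = 0 :=
    fun g₁ hg₁ g₂ hg₂ d hd => prWZ _ (LHH g₁ hg₁ g₂ hg₂ d hd)
  -- the double-bracket operators N d a : w ↦ prW ⁅⁅a, w⁆, d⁆
  set N : L → L → L → L := fun d a v => prW ⁅⁅a, v⁆, d⁆ with hNdef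
  -- self-adjointness of N a b on W
  have Bcross : ∀ a ∈ Zstar, ∀ b ∈ Zstar, ∀ w ∈ W, ∀ w' ∈ W,
      B ⁅b, w⁆ ⁅a, w'⁆ = B ⁅⁅b, w'⁆, a⁆ w := by
    intro a ha b hb w hw w' hw'
    rw [hBsymm, hBad]
    have e1 : ⁅w', ⁅b, w⁆⁆ = ⁅⁅w', b⁆, w⁆ := by
      rw [leibniz_lie w' b w, WW w' hw' w hw, lie_zero, add_zero]
    rw [e1, ← hBad]
    have e2 : ⁅a, ⁅w', b⁆⁆ = ⁅⁅b, w'⁆, a⁆ := by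
      rw [← lie_skew w' b, lie_neg, ← lie_skew a ⁅b,w'⁆, neg_neg]
    rw [e2]
  have NselfAdj : ∀ a ∈ Zstar, ∀ b ∈ Zstar, ∀ w ∈ W, ∀ w' ∈ W,
      B (N a b w) w' = B (N a b w') w := by
    intro a ha b hb w hw w' hw'
    have m1 : ⁅⁅b, w⁆, a⁆ ∈ Z ⊔ W := hbr₂ _ (hMM b (hZstarM hb) w (hWM hw)) a ha
    have m2 : ⁅⁅b, w'⁆, a⁆ ∈ Z ⊔ W := hbr₂ _ (hMM b (hZstarM hb) w' (hWM hw')) a ha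
    calc B (N a b w) w' = B ⁅⁅b, w⁆, a⁆ w' := (BprW _ m1 w' hw').symm
      _ = B ⁅b, w⁆ ⁅a, w'⁆ := hBad _ _ _
      _ = B ⁅⁅b, w'⁆, a⁆ w := Bcross a ha b hb w hw w' hw'
      _ = B (N a b w') w := BprW _ m2 w hw

  -- the swap identity: N d e (prW ⁅h, a⁆) = N d a (prW ⁅h, e⁆) for h ∈ H
  have Nswap : ∀ h ∈ H, ∀ a ∈ Zstar, ∀ d ∈ Zstar, ∀ e ∈ Zstar,
      N d e (prW ⁅h, a⁆) = N d a (prW ⁅h, e⁆) := by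
    intro h hh a ha d hd e he
    obtain ⟨z₂, hz₂, hza, _⟩ := decZW ⁅h, a⁆ (hbr₂ h hh a ha)
    obtain ⟨z₃, hz₃, hze, _⟩ := decZW ⁅h, e⁆ (hbr₂ h hh e he)
    have s1 : ⁅e, prW ⁅h, a⁆⁆ = ⁅e, ⁅h, a⁆⁆ := by
      conv_rhs => rw [hza]
      rw [lie_add, hZc z₂ hz₂ e, zero_add]
    have s2 : ⁅e, ⁅h, a⁆⁆ = ⁅⁅e, h⁆, a⁆ + ⁅h, ⁅e, a⁆⁆ := leibniz_lie e h a
    have s3 : ⁅⁅e, h⁆, a⁆ = ⁅a, prW ⁅h, e⁆⁆ := by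
      have k1 : ⁅e, h⁆ = -⁅h, e⁆ := by rw [← lie_skew]
      have k2 : ⁅prW ⁅h, e⁆, a⁆ = -⁅a, prW ⁅h, e⁆⁆ := by rw [← lie_skew]
      have k3 : ⁅⁅h, e⁆, a⁆ = ⁅prW ⁅h, e⁆, a⁆ := by
        conv_lhs => rw [hze]
        rw [add_lie, hZc' z₃ hz₃ a, zero_add]
      rw [k1, neg_lie, k3, k2, neg_neg]
    have : N d e (prW ⁅h, a⁆) = prW ⁅⁅a, prW ⁅h, e⁆⁆ + ⁅h, ⁅e, a⁆⁆, d⁆ := by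
      show prW ⁅⁅e, prW ⁅h,a⁆⁆, d⁆ = _
      rw [s1, s2, s3]
    rw [this, add_lie, map_add, prLHH h hh ⁅e, a⁆ (hMM e (hZstarM he) a (hZstarM ha)) d hd,
      add_zero]
  -- commutativity of the operators N
  have NtoP : ∀ a ∈ Zstar, ∀ b ∈ Zstar, ∀ d ∈ Zstar, ∀ e ∈ Zstar, ∀ w ∈ W,
      N a b (N d e w) = prW ⁅⁅⁅b, ⁅e, w⁆⁆, d⁆, a⁆ := by
    intro a ha b hb d hd e he w hw
    have hewH : ⁅e, w⁆ ∈ H := hMM e (hZstarM he) w (hWM hw)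
    have hu : ⁅⁅e, w⁆, d⁆ ∈ Z ⊔ W := hbr₂ _ hewH d hd
    obtain ⟨z₀, hz₀, hzu, _⟩ := decZW _ hu
    have s1 : ⁅b, N d e w⁆ = ⁅b, ⁅⁅e, w⁆, d⁆⁆ := by
      conv_rhs => rw [hzu]
      show _ = ⁅b, z₀ + prW ⁅⁅e,w⁆,d⁆⁆
      rw [lie_add, hZc z₀ hz₀ b, zero_add]
    have s2 : ⁅b, ⁅⁅e, w⁆, d⁆⁆ = ⁅⁅b, ⁅e, w⁆⁆, d⁆ + ⁅⁅e, w⁆, ⁅b, d⁆⁆ :=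
      leibniz_lie b ⁅e, w⁆ d
    show prW ⁅⁅b, N d e w⁆, a⁆ = _
    rw [s1, s2, add_lie, map_add,
      prLHH ⁅e, w⁆ hewH ⁅b, d⁆ (hMM b (hZstarM hb) d (hZstarM hd)) a ha, add_zero]
  have Pad : ∀ X ∈ Z ⊔ W, ∀ a ∈ Zstar, ∀ d ∈ Zstar,
      prW ⁅⁅X, d⁆, a⁆ = prW ⁅⁅X, a⁆, d⁆ := by
    intro X hX a ha d hd
    have e1 : prW ⁅X, ⁅d, a⁆⁆ = 0 := by
      apply prWZ
      have k1 : ⁅X, ⁅d, a⁆⁆ = -⁅⁅d, a⁆, X⁆ := by rw [← lie_skew]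
      rw [k1]
      exact neg_mem (hbr₁ _ (hMM d (hZstarM hd) a (hZstarM ha)) X hX)
    have e2 : -⁅d, ⁅X, a⁆⁆ = ⁅⁅X, a⁆, d⁆ := lie_skew _ _
    rw [lie_lie X d a, map_sub, e1, zero_sub, ← e2, map_neg]
  have Pbe : ∀ b ∈ Zstar, ∀ e ∈ Zstar, ∀ w ∈ W, ∀ d : L, ∀ a : L,
      prW ⁅⁅⁅b, ⁅e, w⁆⁆, d⁆, a⁆ = prW ⁅⁅⁅e, ⁅b, w⁆⁆, d⁆, a⁆ := by
    intro b hb e he w hw d a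
    have s1 : ⁅b, ⁅e, w⁆⁆ = ⁅⁅b, e⁆, w⁆ + ⁅e, ⁅b, w⁆⁆ := leibniz_lie b e w
    have hz₁ : ⁅⁅b, e⁆, w⁆ ∈ Z := hbr₁ _ (hMM b (hZstarM hb) e (hZstarM he)) w (hWZW hw)
    rw [s1, add_lie, hZc' _ hz₁ d, zero_add]
  have Ncomm : ∀ a ∈ Zstar, ∀ b ∈ Zstar, ∀ d ∈ Zstar, ∀ e ∈ Zstar, ∀ w ∈ W,
      N a b (N d e w) = N d e (N a b w) := by
    intro a ha b hb d hd e he w hw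
    have hX : ⁅b, ⁅e, w⁆⁆ ∈ Z ⊔ W := by
      have k1 : ⁅b, ⁅e, w⁆⁆ = -⁅⁅e, w⁆, b⁆ := by rw [← lie_skew]
      rw [k1]
      exact neg_mem (hbr₂ _ (hMM e (hZstarM he) w (hWM hw)) b hb)
    calc N a b (N d e w) = prW ⁅⁅⁅b, ⁅e, w⁆⁆, d⁆, a⁆ := NtoP a ha b hb d hd e he w hw
      _ = prW ⁅⁅⁅b, ⁅e, w⁆⁆, a⁆, d⁆ := Pad _ hX a ha d hd
      _ = prW ⁅⁅⁅e, ⁅b, w⁆⁆, a⁆, d⁆ := Pbe b hb e he w hw a d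
      _ = N d e (N a b w) := (NtoP d hd e he a ha b hb w hw).symm

  -- linearity of N in the Zstar slots
  have Nadd2 : ∀ d x y v : L, N d (x + y) v = N d x v + N d y v := by
    intro d x y v
    show prW ⁅⁅x + y, v⁆, d⁆ = prW ⁅⁅x, v⁆, d⁆ + prW ⁅⁅y, v⁆, d⁆
    rw [add_lie, add_lie, map_add]
  have Nsmul2 : ∀ (r : ℝ) (d x v : L), N d (r • x) v = r • N d x v := by
    intro r d x v
    show prW ⁅⁅r • x, v⁆, d⁆ = r • prW ⁅⁅x, v⁆, d⁆
    rw [smul_lie, smul_lie, map_smul]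
  have Nadd1 : ∀ x y a v : L, N (x + y) a v = N x a v + N y a v := by
    intro x y a v
    show prW ⁅⁅a, v⁆, x + y⁆ = prW ⁅⁅a, v⁆, x⁆ + prW ⁅⁅a, v⁆, y⁆
    rw [lie_add, map_add]
  have Nsmul1 : ∀ (r : ℝ) (x a v : L), N (r • x) a v = r • N x a v := by
    intro r x a v
    show prW ⁅⁅a, v⁆, r • x⁆ = r • prW ⁅⁅a, v⁆, x⁆
    rw [lie_smul, map_smul]
  -- the endomorphisms of W induced by N
  let nE : L → L → Module.End ℝ ↥W := fun d a =>
    { toFun := fun w => ⟨N d a (w : L), hprW₁ _⟩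
      map_add' := by
        intro x y
        apply Subtype.ext
        show prW ⁅⁅a, ((x : L) + (y : L))⁆, d⁆ = _
        rw [lie_add, add_lie, map_add]
        rfl
      map_smul' := by
        intro r x
        apply Subtype.ext
        show prW ⁅⁅a, (r • (x : L))⁆, d⁆ = _
        rw [lie_smul, smul_lie, map_smul]
        rfl }
  have nE_apply : ∀ d a : L, ∀ w : ↥W, ((nE d a w : ↥W) : L) = N d a (w : L) :=
    fun _ _ _ => rfl
  have selfadjE : ∀ a ∈ Zstar, ∀ b ∈ Zstar, ∀ x y : ↥W,
      B ↑(nE a b x) ↑y = B ↑x ↑(nE a b y) := by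
    intro a ha b hb x y
    rw [nE_apply, nE_apply]
    exact (NselfAdj a ha b hb (x : L) x.2 (y : L) y.2).trans (hBsymm _ _)
  have commE : ∀ a ∈ Zstar, ∀ b ∈ Zstar, ∀ d ∈ Zstar, ∀ e ∈ Zstar,
      Commute (nE a b) (nE d e) := by
    intro a ha b hb d hd e he
    apply LinearMap.ext
    intro w
    apply Subtype.ext
    show N a b (N d e (w : L)) = N d e (N a b (w : L))
    exact Ncomm a ha b hb d hd e he (w : L) w.2
  -- a finite spanning set of Zstar
  obtain ⟨s, hs⟩ := IsNoetherian.noetherian Zstar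
  have hsZ : ∀ p ∈ s, p ∈ Zstar := fun p hp => hs ▸ Submodule.subset_span hp
  -- the positive operator A
  set A : Module.End ℝ ↥W := ∑ pq ∈ s ×ˢ s, nE pq.1 pq.2 * nE pq.1 pq.2 with hAdef
  have hBWnonneg : ∀ v : ↥W, 0 ≤ B (v : L) (v : L) := by
    intro v
    rcases eq_or_ne v 0 with rfl | hv
    · simp
    · exact le_of_lt (hWpos (v : L) v.2 (fun hc => hv (Subtype.ext hc)))
  have hBWzero : ∀ v : ↥W, B (v : L) (v : L) = 0 → v = 0 := by
    intro v hv
    by_contra hne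
    exact absurd hv (ne_of_gt (hWpos (v : L) v.2 (fun hc => hne (Subtype.ext hc))))
  have hAker : ∀ w : ↥W, A w = 0 → w = 0 := by
    intro w hw
    have h0 : ∑ pq ∈ s ×ˢ s, B ↑(nE pq.1 pq.2 w) ↑(nE pq.1 pq.2 w) = 0 := by
      have e1 : B ↑(A w) ↑w = 0 := by rw [hw]; simp
      have e2 : B ↑(A w) ↑w
          = ∑ pq ∈ s ×ˢ s, B ↑((nE pq.1 pq.2 * nE pq.1 pq.2) w) ↑w := by
        rw [hAdef, LinearMap.sum_apply, Submodule.coe_sum, map_sum, LinearMap.sum_apply]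
      have e3 : ∀ pq ∈ s ×ˢ s,
          B ↑((nE pq.1 pq.2 * nE pq.1 pq.2) w) ↑w
            = B ↑(nE pq.1 pq.2 w) ↑(nE pq.1 pq.2 w) := by
        intro pq hpq
        have h1 := (Finset.mem_product.mp hpq).1
        have h2 := (Finset.mem_product.mp hpq).2
        rw [Module.End.mul_apply]
        exact selfadjE pq.1 (hsZ _ h1) pq.2 (hsZ _ h2) (nE pq.1 pq.2 w) w
      rw [← Finset.sum_congr rfl e3, ← e2, e1]
    have hterm : ∀ pq ∈ s ×ˢ s, nE pq.1 pq.2 w = 0 := by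
      intro pq hpq
      have := (Finset.sum_eq_zero_iff_of_nonneg
        (fun pq _ => hBWnonneg (nE pq.1 pq.2 w))).mp h0 pq hpq
      exact hBWzero _ this
    -- extend to all of Zstar by linearity
    have h1 : ∀ p ∈ s, ∀ b ∈ Zstar, N p b (w : L) = 0 := by
      intro p hp b hb
      rw [← hs] at hb
      induction hb using Submodule.span_induction with
      | mem q hq =>
          have := hterm (p, q) (Finset.mem_product.mpr ⟨hp, hq⟩)
          have := congrArg (Subtype.val) this
          simpa [nE_apply] using this
      | zero =>
          show prW ⁅⁅(0 : L), (w : L)⁆, p⁆ = 0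
          simp
      | add x y hx hy ihx ihy => rw [Nadd2, ihx, ihy, add_zero]
      | smul r x hx ihx => rw [Nsmul2, ihx, smul_zero]
    have h2 : ∀ a ∈ Zstar, ∀ b ∈ Zstar, N a b (w : L) = 0 := by
      intro a ha b hb
      rw [← hs] at ha
      induction ha using Submodule.span_induction with
      | mem p hp => exact h1 p hp b hb
      | zero =>
          show prW ⁅⁅b, (w : L)⁆, (0 : L)⁆ = 0
          simp
      | add x y hx hy ihx ihy => rw [Nadd1, ihx, ihy, add_zero]
      | smul r x hx ihx => rw [Nsmul1, ihx, smul_zero]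
    have : (w : L) = 0 := by
      apply hleast (w : L) w.2
      intro a ha b hb
      have k1 : ⁅a, ⁅b, (w : L)⁆⁆ = -⁅⁅b, (w : L)⁆, a⁆ := by rw [← lie_skew]
      rw [k1, map_neg]
      show -(N a b (w : L)) = 0
      rw [h2 a ha b hb, neg_zero]
    exact Subtype.ext this
  have hAinj : Function.Injective A := by
    intro x y hxy
    have : A (x - y) = 0 := by rw [map_sub, hxy, sub_self]
    have := hAker _ this
    exact sub_eq_zero.mp this
  have hAcomm : ∀ x ∈ Zstar, ∀ y ∈ Zstar, Commute A (nE x y) := by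
    intro x hx y hy
    apply Commute.sum_left
    intro pq hpq
    have h1 := hsZ _ (Finset.mem_product.mp hpq).1
    have h2 := hsZ _ (Finset.mem_product.mp hpq).2
    exact (commE pq.1 h1 pq.2 h2 x hx y hy).mul_left (commE pq.1 h1 pq.2 h2 x hx y hy)

  set SWgen : Set L := {x : L | ∃ p ∈ Zstar, ∃ v ∈ W, ⁅p, v⁆ = x} with hSW
  have hbrZW : ∀ g ∈ H, ∀ x ∈ M, ⁅g, x⁆ ∈ Z ⊔ W := by
    intro g hg x hx
    obtain ⟨u, hu, aa, haa, rfl⟩ := decM x hx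
    rw [lie_add]
    exact add_mem (Submodule.mem_sup_left (hbr₁ g hg u hu)) (hbr₂ g hg aa haa)
  have CC : ∀ u ∈ Z ⊔ W, ∀ y ∈ M, ⁅u, y⁆ ∈ Submodule.span ℝ SWgen := by
    intro u hu y hy
    obtain ⟨z, hz, hzu, _⟩ := decZW u hu
    obtain ⟨u', hu', aa, haa, rfl⟩ := decM y hy
    obtain ⟨z', hz', hzu', _⟩ := decZW u' hu'
    have k : ⁅prW u, aa⁆ = -⁅aa, prW u⁆ := by rw [← lie_skew]
    have e1 : ⁅u, u' + aa⁆ = -⁅aa, prW u⁆ := by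
      conv_lhs => rw [hzu, hzu']
      rw [add_lie, hZc' z hz, zero_add, lie_add, lie_add, hZc z' hz' (prW u),
        WW _ (hprW₁ u) _ (hprW₁ u'), zero_add, zero_add, k]
    rw [e1]
    exact neg_mem (Submodule.subset_span ⟨aa, haa, prW u, hprW₁ u, rfl⟩)
  have hH1gen : ∀ t ∈ H, ⁅h₁, t⁆ ∈ Submodule.span ℝ SWgen := by
    intro t ht'
    have hh₂' : t ∈ Submodule.span ℝ {z : L | ∃ x ∈ M, ∃ y ∈ M, ⁅x, y⁆ = z} := by
      rw [← hHspan]; exact ht'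
    clear ht'
    induction hh₂' using Submodule.span_induction with
    | mem t ht =>
        obtain ⟨x, hx, y, hy, rfl⟩ := ht
        have e : ⁅h₁, ⁅x, y⁆⁆ = ⁅⁅h₁, x⁆, y⁆ + ⁅x, ⁅h₁, y⁆⁆ := leibniz_lie h₁ x y
        rw [e]
        apply add_mem
        · exact CC _ (hbrZW h₁ hh₁ x hx) y hy
        · have k : ⁅x, ⁅h₁, y⁆⁆ = -⁅⁅h₁, y⁆, x⁆ := by rw [← lie_skew]
          rw [k]
          exact neg_mem (CC _ (hbrZW h₁ hh₁ y hy) x hx)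
    | zero => rw [lie_zero]; exact zero_mem _
    | add x y hx hy ihx ihy => rw [lie_add]; exact add_mem ihx ihy
    | smul r x hx ihx => rw [lie_smul]; exact Submodule.smul_mem _ r ihx
  -- the element c = ⁅h₁, h₂⁆ and its properties
  set c : L := ⁅h₁, h₂⁆ with hcdef
  have hcH : c ∈ H := by
    rw [hH, hcdef, LieHom.map_lie, (hH h₁).mp hh₁, (hH h₂).mp hh₂]
  have hcZ : ∀ d ∈ Zstar, ⁅c, d⁆ ∈ Z := fun d hd => LHH h₁ hh₁ h₂ hh₂ d hd
  have hcH1 : c ∈ Submodule.span ℝ SWgen := hH1gen h₂ hh₂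
  -- the core computation: c is orthogonal to ⁅Zstar, Zstar⁆
  have core : ∀ a ∈ Zstar, ∀ b ∈ Zstar, B ⁅a, b⁆ c = 0 := by
    intro a ha b hb
    have habH : ⁅a, b⁆ ∈ H := hMM a (hZstarM ha) b (hZstarM hb)
    obtain ⟨n, f, g, hgsum⟩ := Submodule.mem_span_set'.mp hcH1
    have hgi : ∀ i : Fin n, ∃ p, p ∈ Zstar ∧ ∃ v, v ∈ W ∧ ⁅p, v⁆ = (g i : L) := by
      intro i
      obtain ⟨p, hp, v, hv, he⟩ := (g i).2
      exact ⟨p, hp, v, hv, he⟩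
    choose p hpZ v0 hv0 hpv using hgi
    set v : Fin n → L := fun i => f i • v0 i with hvdef
    have hvW : ∀ i, v i ∈ W := fun i => Submodule.smul_mem W (f i) (hv0 i)
    have hcsum : c = ∑ i, ⁅p i, v i⁆ := by
      rw [← hgsum]
      apply Finset.sum_congr rfl
      intro i _
      show f i • (g i : L) = ⁅p i, f i • v0 i⁆
      rw [lie_smul, hpv i]
    set u : Fin n → ↥W := fun i => ⟨prW ⁅⁅a, b⁆, p i⁆, hprW₁ _⟩ with hudef
    set vW : Fin n → ↥W := fun i => ⟨v i, hvW i⟩ with hvWdef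
    have hvanish : ∀ d ∈ Zstar, (∑ i, nE d (p i) (vW i)) = (0 : ↥W) := by
      intro d hd
      apply Subtype.ext
      rw [Submodule.coe_sum]
      show (∑ i, N d (p i) (v i)) = (0 : L)
      have e1 : ∀ x : L, prW ⁅x, d⁆ = (-(prW ∘ₗ (LieAlgebra.ad ℝ L d))) x := by
        intro x
        have k : ⁅x, d⁆ = -⁅d, x⁆ := by rw [← lie_skew]
        rw [LinearMap.neg_apply, LinearMap.comp_apply, LieAlgebra.ad_apply, k, map_neg]
      have e2 : ∑ i, N d (p i) (v i)
          = ∑ i, (-(prW ∘ₗ (LieAlgebra.ad ℝ L d))) ⁅p i, v i⁆ :=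
        Finset.sum_congr rfl fun i _ => e1 ⁅p i, v i⁆
      rw [e2, ← map_sum, ← hcsum, ← e1, prWZ _ (hcZ d hd)]
    have KEY : ∀ T : Module.End ℝ ↥W, (∀ x ∈ Zstar, ∀ y ∈ Zstar, Commute T (nE x y)) →
        ∀ x ∈ Zstar, ∀ y ∈ Zstar, ∑ i, B ↑(T (nE x y (u i))) (v i) = 0 := by
      intro T hT x hx y hy
      set V : ↥W := ⟨prW ⁅⁅a, b⁆, y⁆, hprW₁ _⟩ with hVdef
      have swap : ∀ i, nE x y (u i) = nE x (p i) V := by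
        intro i
        apply Subtype.ext
        show N x y (prW ⁅⁅a, b⁆, p i⁆) = N x (p i) (prW ⁅⁅a, b⁆, y⁆)
        exact Nswap ⁅a, b⁆ habH (p i) (hpZ i) x hx y hy
      have e2 : ∀ i, B ↑(T (nE x y (u i))) (v i) = B ↑(T V) ↑(nE x (p i) (vW i)) := by
        intro i
        rw [swap i]
        have ecomm : T (nE x (p i) V) = nE x (p i) (T V) := by
          have hc := hT x hx (p i) (hpZ i)
          calc T (nE x (p i) V) = (T * nE x (p i)) V := rfl
            _ = (nE x (p i) * T) V := by rw [hc]
            _ = nE x (p i) (T V) := rfl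
        rw [ecomm]
        exact selfadjE x hx (p i) (hpZ i) (T V) (vW i)
      calc ∑ i, B ↑(T (nE x y (u i))) (v i)
          = ∑ i, B ↑(T V) ↑(nE x (p i) (vW i)) := Finset.sum_congr rfl fun i _ => e2 i
        _ = B ↑(T V) ↑(∑ i, nE x (p i) (vW i)) := by rw [Submodule.coe_sum, map_sum]
        _ = 0 := by rw [hvanish x hx]; simp
    have POW : ∀ m : ℕ, ∑ i, B ↑((A ^ (m + 1)) (u i)) (v i) = 0 := by
      intro m
      have hApow : A ^ (m + 1) = ∑ pq ∈ s ×ˢ s, (A ^ m * nE pq.1 pq.2) * nE pq.1 pq.2 := by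
        rw [pow_succ, hAdef, Finset.mul_sum]
        exact Finset.sum_congr rfl fun pq _ => (mul_assoc _ _ _).symm
      calc ∑ i, B ↑((A ^ (m + 1)) (u i)) (v i)
          = ∑ i, ∑ pq ∈ s ×ˢ s,
              B ↑(((A ^ m * nE pq.1 pq.2) * nE pq.1 pq.2) (u i)) (v i) := by
            apply Finset.sum_congr rfl
            intro i _
            rw [hApow, LinearMap.sum_apply, Submodule.coe_sum, map_sum, LinearMap.sum_apply]
        _ = ∑ pq ∈ s ×ˢ s, ∑ i,
              B ↑(((A ^ m * nE pq.1 pq.2) * nE pq.1 pq.2) (u i)) (v i) := Finset.sum_comm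
        _ = 0 := by
            apply Finset.sum_eq_zero
            intro pq hpq
            have hq1 := hsZ _ (Finset.mem_product.mp hpq).1
            have hq2 := hsZ _ (Finset.mem_product.mp hpq).2
            have hTcomm : ∀ x ∈ Zstar, ∀ y ∈ Zstar,
                Commute (A ^ m * nE pq.1 pq.2) (nE x y) := by
              intro x hx y hy
              exact ((hAcomm x hx y hy).pow_left m).mul_left
                (commE pq.1 hq1 pq.2 hq2 x hx y hy)
            calc ∑ i, B ↑(((A ^ m * nE pq.1 pq.2) * nE pq.1 pq.2) (u i)) (v i)
                = ∑ i, B ↑((A ^ m * nE pq.1 pq.2) (nE pq.1 pq.2 (u i))) (v i) :=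
                  Finset.sum_congr rfl fun i _ => by rw [Module.End.mul_apply]
              _ = 0 := KEY (A ^ m * nE pq.1 pq.2) hTcomm pq.1 hq1 pq.2 hq2
    have hone : (1 : Module.End ℝ ↥W) ∈
        Submodule.span ℝ (Set.range fun m : ℕ => A ^ (m + 1)) :=
      one_mem_span_pow_succ A hAinj
    have hPgen : ∀ T ∈ Submodule.span ℝ (Set.range fun m : ℕ => A ^ (m + 1)),
        ∑ i, B ↑(T (u i)) (v i) = 0 := by
      intro T hT
      induction hT using Submodule.span_induction with
      | mem T hT =>
          obtain ⟨m, rfl⟩ := hT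
          exact POW m
      | zero => simp
      | add T T' hT hT' ih ih' =>
          have e : ∀ i : Fin n, B ↑((T + T') (u i)) (v i)
              = B ↑(T (u i)) (v i) + B ↑(T' (u i)) (v i) := by
            intro i
            rw [LinearMap.add_apply, Submodule.coe_add, map_add, LinearMap.add_apply]
          rw [Finset.sum_congr rfl fun i _ => e i, Finset.sum_add_distrib, ih, ih', add_zero]
      | smul r T hT ih =>
          have e : ∀ i : Fin n, B ↑((r • T) (u i)) (v i) = r * B ↑(T (u i)) (v i) := by
            intro i
            have e0 : (((r • T) (u i) : ↥W) : L) = r • ((T (u i) : ↥W) : L) := rfl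
            rw [e0, LinearMap.map_smul₂, smul_eq_mul]
          rw [Finset.sum_congr rfl fun i _ => e i, ← Finset.mul_sum, ih, mul_zero]
    have hP : ∑ i, B ↑((1 : Module.End ℝ ↥W) (u i)) (v i) = 0 := hPgen 1 hone
    have hfin : ∑ i, B (prW ⁅⁅a, b⁆, p i⁆) (v i) = 0 := by
      rw [← hP]
      apply Finset.sum_congr rfl
      intro i _
      rw [Module.End.one_apply]
    have hexp : B ⁅a, b⁆ c = ∑ i, B (prW ⁅⁅a, b⁆, p i⁆) (v i) := by
      rw [hcsum, map_sum]
      apply Finset.sum_congr rfl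
      intro i _
      rw [← hBad]
      exact BprW _ (hbr₂ _ habH (p i) (hpZ i)) (v i) (hvW i)
    rw [hexp, hfin]
  -- c is orthogonal to everything, hence zero
  have Bbr : ∀ x ∈ M, ∀ y ∈ M, B c ⁅x, y⁆ = 0 := by
    intro x hx y hy
    obtain ⟨ux, hux, ax, hax, rfl⟩ := decM x hx
    obtain ⟨uy, huy, ay, hay, rfl⟩ := decM y hy
    obtain ⟨zx, hzx, hzux, _⟩ := decZW ux hux
    obtain ⟨zy, hzy, hzuy, _⟩ := decZW uy huy
    have e : ⁅ux + ax, uy + ay⁆ = ⁅ux, uy⁆ + ⁅ux, ay⁆ + ⁅ax, uy⁆ + ⁅ax, ay⁆ := by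
      rw [add_lie, lie_add, lie_add]
      abel
    have t1 : ⁅ux, uy⁆ = 0 := by
      conv_lhs => rw [hzux, hzuy]
      rw [add_lie, hZc' zx hzx, zero_add, lie_add, hZc zy hzy (prW ux), zero_add,
        WW _ (hprW₁ ux) _ (hprW₁ uy)]
    have t2 : B c ⁅ux, ay⁆ = 0 := by
      have e2 : ⁅ux, ay⁆ = -⁅ay, prW ux⁆ := by
        have k : ⁅prW ux, ay⁆ = -⁅ay, prW ux⁆ := by rw [← lie_skew]
        conv_lhs => rw [hzux]
        rw [add_lie, hZc' zx hzx, zero_add, k]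
      rw [e2, map_neg]
      have e3 : B c ⁅ay, prW ux⁆ = 0 := by
        rw [← hBad]
        exact hBZW _ (hcZ ay hay) _ (hprW₁ ux)
      rw [e3, neg_zero]
    have t3 : B c ⁅ax, uy⁆ = 0 := by
      have e2 : ⁅ax, uy⁆ = ⁅ax, prW uy⁆ := by
        conv_lhs => rw [hzuy]
        rw [lie_add, hZc zy hzy ax, zero_add]
      rw [e2, ← hBad]
      exact hBZW _ (hcZ ax hax) _ (hprW₁ uy)
    have t4 : B c ⁅ax, ay⁆ = 0 := by
      rw [hBsymm]
      exact core ax hax ay hay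
    rw [e, map_add, map_add, map_add, t1, t2, t3, t4, map_zero, add_zero, add_zero, add_zero]
  have BH : ∀ t ∈ H, B c t = 0 := by
    intro t ht'
    have hxh' : t ∈ Submodule.span ℝ {z : L | ∃ x ∈ M, ∃ y ∈ M, ⁅x, y⁆ = z} := by
      rw [← hHspan]; exact ht'
    clear ht'
    induction hxh' using Submodule.span_induction with
    | mem t ht =>
        obtain ⟨x', hx', y', hy', rfl⟩ := ht
        exact Bbr x' hx' y' hy'
    | zero => rw [map_zero]
    | add x y hx hy ihx ihy => rw [map_add, ihx, ihy, add_zero]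
    | smul r x hx ihx => rw [map_smul, ihx, smul_zero]
  have horth : ∀ x : L, B c x = 0 := by
    intro x
    have hx : x ∈ H ⊔ M := by rw [hcompl.sup_eq_top]; trivial
    obtain ⟨xh, hxh, xm, hxm, rfl⟩ := Submodule.mem_sup.mp hx
    rw [map_add]
    have t2 : B c xm = 0 := BHM c hcH xm hxm
    have t1 : B c xh = 0 := BH xh hxh
    rw [t1, t2, add_zero]
  exact hBnd.1 c horth
end

section
/- Let (g,σ,B) be a solvable symmetric triple with g = h ⊕ m whose center z(g) is one-dimensional. Then the triple is indecomposable: m contains no proper nonzero subspace that is invariant under ad(h) and on which B restricts nondegenerately. -/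
/-- Auxiliary lemma: in a solvable "symmetric-triple-like" situation, if `M = m₁ ⊔ m₂`
with both pieces `ad H`-invariant, mutually `B`-orthogonal, `B` nondegenerate on each,
and `m₂ ⊆ span ⁅H, m₂⁆`, then `m₂ = ⊥`. -/
theorem aux_m2_eq_bot {L : Type*} [LieRing L] [LieAlgebra ℝ L]
    [LieAlgebra.IsSolvable L]
    (H M : Submodule ℝ L)
    (hHspan : H = Submodule.span ℝ {z : L | ∃ x ∈ M, ∃ y ∈ M, ⁅x, y⁆ = z})
    (B : LinearMap.BilinForm ℝ L)
    (hBad : ∀ x y z : L, B ⁅x, y⁆ z = B x ⁅y, z⁆)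
    (m₁ m₂ : Submodule ℝ L)
    (hsup : m₁ ⊔ m₂ = M)
    (hinv₁ : ∀ h ∈ H, ∀ x ∈ m₁, ⁅h, x⁆ ∈ m₁)
    (hinv₂ : ∀ h ∈ H, ∀ x ∈ m₂, ⁅h, x⁆ ∈ m₂)
    (horth : ∀ x ∈ m₁, ∀ y ∈ m₂, B x y = 0)
    (hnd₁ : ∀ x ∈ m₁, (∀ y ∈ m₁, B x y = 0) → x = 0)
    (hnd₂ : ∀ x ∈ m₂, (∀ y ∈ m₂, B x y = 0) → x = 0)
    (hK₂ : m₂ ≤ Submodule.span ℝ {z : L | ∃ h ∈ H, ∃ x ∈ m₂, ⁅h, x⁆ = z}) :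
    m₂ = ⊥ := by
  have hm₁M : m₁ ≤ M := le_trans le_sup_left hsup.le
  have hm₂M : m₂ ≤ M := le_trans le_sup_right hsup.le
  have hMM_H : ∀ x ∈ M, ∀ y ∈ M, (⁅x, y⁆ : L) ∈ H := by
    intro x hx y hy
    rw [hHspan]
    exact Submodule.subset_span ⟨x, hx, y, hy, rfl⟩
  -- Step A : elements of ⁅m₁, m₂⁆ commute with everything in M
  have cA : ∀ x ∈ m₁, ∀ y ∈ m₂, ∀ u ∈ M, (⁅(⁅x, y⁆ : L), u⁆ : L) = 0 := by
    intro x hx y hy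
    have hxyH : (⁅x, y⁆ : L) ∈ H := hMM_H x (hm₁M hx) y (hm₂M hy)
    have h1 : ∀ u ∈ m₁, (⁅(⁅x, y⁆ : L), u⁆ : L) = 0 := by
      intro u hu
      refine hnd₁ _ (hinv₁ _ hxyH u hu) ?_
      intro v hv
      have huvH : (⁅u, v⁆ : L) ∈ H := hMM_H u (hm₁M hu) v (hm₁M hv)
      have hw : (⁅(⁅u, v⁆ : L), y⁆ : L) ∈ m₂ := hinv₂ _ huvH y hy
      rw [hBad, hBad, ← lie_skew y ⁅u, v⁆, map_neg, horth x hx _ hw, neg_zero]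
    have h2 : ∀ u ∈ m₂, (⁅(⁅x, y⁆ : L), u⁆ : L) = 0 := by
      intro u hu
      refine hnd₂ _ (hinv₂ _ hxyH u hu) ?_
      intro v hv
      have huvH : (⁅u, v⁆ : L) ∈ H := hMM_H u (hm₂M hu) v (hm₂M hv)
      have hw : (⁅(⁅u, v⁆ : L), y⁆ : L) ∈ m₂ := hinv₂ _ huvH y hy
      rw [hBad, hBad, ← lie_skew y ⁅u, v⁆, map_neg, horth x hx _ hw, neg_zero]
    intro u hu
    rw [← hsup] at hu
    obtain ⟨a, ha, b, hb, rfl⟩ := Submodule.mem_sup.1 hu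
    rw [lie_add, h1 a ha, h2 b hb, add_zero]
  -- m₂ is contained in every term of the derived series
  have key : ∀ k : ℕ, ∀ x ∈ m₂, x ∈ LieAlgebra.derivedSeries ℝ L k := by
    intro k
    induction k with
    | zero =>
      intro x _
      rw [LieAlgebra.derivedSeries_def, LieAlgebra.derivedSeriesOfIdeal_zero]
      exact LieSubmodule.mem_top x
    | succ k ih =>
      intro x hx
      set D' : Submodule ℝ L := (LieAlgebra.derivedSeries ℝ L (k + 1) : Submodule ℝ L)
        with hD'
      suffices hs : Submodule.span ℝ {z : L | ∃ h ∈ H, ∃ x ∈ m₂, ⁅h, x⁆ = z} ≤ D' by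
        exact (LieSubmodule.mem_toSubmodule _).1 (hs (hK₂ hx))
      apply Submodule.span_le.2
      rintro z ⟨h, hh, u, hu, rfl⟩
      have hcom : H ≤ Submodule.comap (LieAlgebra.ad ℝ L u : L →ₗ[ℝ] L) D' := by
        rw [hHspan]
        apply Submodule.span_le.2
        rintro w ⟨a, ha, b, hb, rfl⟩
        simp only [SetLike.mem_coe, Submodule.mem_comap, LieAlgebra.ad_apply]
        rw [← hsup] at ha hb
        obtain ⟨a₁, ha₁, a₂, ha₂, rfl⟩ := Submodule.mem_sup.1 ha
        obtain ⟨b₁, hb₁, b₂, hb₂, rfl⟩ := Submodule.mem_sup.1 hb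
        have t11 : (⁅(⁅a₁, b₁⁆ : L), u⁆ : L) = 0 := by
          rw [lie_lie, ← lie_skew a₁ ⁅b₁, u⁆, ← lie_skew b₁ ⁅a₁, u⁆,
            cA b₁ hb₁ u hu a₁ (hm₁M ha₁), cA a₁ ha₁ u hu b₁ (hm₁M hb₁), neg_zero, sub_zero]
        have t12 : (⁅(⁅a₁, b₂⁆ : L), u⁆ : L) = 0 := cA a₁ ha₁ b₂ hb₂ u (hm₂M hu)
        have t21 : (⁅(⁅a₂, b₁⁆ : L), u⁆ : L) = 0 := by
          rw [← lie_skew a₂ b₁, neg_lie, cA b₁ hb₁ a₂ ha₂ u (hm₂M hu), neg_zero]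
        have t22 : (⁅(⁅a₂, b₂⁆ : L), u⁆ : L) ∈ LieAlgebra.derivedSeries ℝ L (k + 1) := by
          rw [LieAlgebra.derivedSeries_def, LieAlgebra.derivedSeriesOfIdeal_succ]
          exact LieSubmodule.lie_mem_lie
            ((LieAlgebra.derivedSeries ℝ L k).lie_mem (ih b₂ hb₂)) (ih u hu)
        have goal_eq : (⁅u, ⁅a₁ + a₂, b₁ + b₂⁆⁆ : L) = -⁅(⁅a₂, b₂⁆ : L), u⁆ := by
          rw [← lie_skew u ⁅a₁ + a₂, b₁ + b₂⁆]
          simp only [lie_add, add_lie, t11, t12, t21, zero_add, add_zero]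
        rw [goal_eq]
        exact neg_mem ((LieSubmodule.mem_toSubmodule _).2 t22)
      have h1 : (⁅u, h⁆ : L) ∈ D' := by
        have := hcom hh
        rwa [Submodule.mem_comap, LieAlgebra.ad_apply] at this
      rw [SetLike.mem_coe, ← lie_skew h u]
      exact neg_mem h1
  obtain ⟨k, hk⟩ := LieAlgebra.IsSolvable.solvable (R := ℝ) (L := L)
  rw [eq_bot_iff]
  intro x hx
  have := key k x hx
  rw [hk] at this
  simpa using this
/-- A solvable symmetric triple whose center is one-dimensional is
indecomposable. -/
theorem indecomposable_of_one_dim_center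
    (L : Type*) [LieRing L] [LieAlgebra ℝ L] [FiniteDimensional ℝ L]
    [LieAlgebra.IsSolvable L]
    (σ : L →ₗ⁅ℝ⁆ L) (hσ : ∀ x, σ (σ x) = x)
    (H M : Submodule ℝ L)
    (hH : ∀ x, x ∈ H ↔ σ x = x)
    (hM : ∀ x, x ∈ M ↔ σ x = -x)
    (hcompl : IsCompl H M)
    (hHspan : H = Submodule.span ℝ {z : L | ∃ x ∈ M, ∃ y ∈ M, ⁅x, y⁆ = z})
    (B : LinearMap.BilinForm ℝ L)
    (hBnd : B.Nondegenerate)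
    (hBsymm : ∀ x y : L, B x y = B y x)
    (hBσ : ∀ x y : L, B (σ x) (σ y) = B x y)
    (hBad : ∀ x y z : L, B ⁅x, y⁆ z = B x ⁅y, z⁆)
    (hcenter : Module.finrank ℝ (LieAlgebra.center ℝ L).toSubmodule = 1) :
    ∀ m' : Submodule ℝ L, m' ≤ M →
      (∀ h ∈ H, ∀ x ∈ m', ⁅h, x⁆ ∈ m') →
      (∀ x ∈ m', (∀ y ∈ m', B x y = 0) → x = 0) →
      m' = ⊥ ∨ m' = M := by
  intro m' hm'M hinv hnd
  have hBrefl : B.IsRefl := fun x y hxy => by rw [hBsymm]; exact hxy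
  have hMM_H : ∀ x ∈ M, ∀ y ∈ M, (⁅x, y⁆ : L) ∈ H := by
    intro x hx y hy
    rw [hHspan]
    exact Submodule.subset_span ⟨x, hx, y, hy, rfl⟩
  have hHM_M : ∀ h ∈ H, ∀ x ∈ M, (⁅h, x⁆ : L) ∈ M := by
    intro h hh x hx
    rw [hM]
    rw [σ.map_lie, (hH h).1 hh, (hM x).1 hx, lie_neg]
  have hHMorth : ∀ h ∈ H, ∀ x ∈ M, B h x = 0 := by
    intro h hh x hx
    have h2 := hBσ h x
    rw [(hH h).1 hh, (hM x).1 hx, map_neg] at h2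
    linarith
  have hBMnd : ∀ x ∈ M, (∀ y ∈ M, B x y = 0) → x = 0 := by
    intro x hx h0
    apply hBnd.1
    intro y
    obtain ⟨a, b, ha, hb, rfl⟩ :=
      Submodule.codisjoint_iff_exists_add_eq.mp hcompl.codisjoint y
    rw [map_add, hBsymm x a, hHMorth a ha x hx, h0 b hb, add_zero]
  -- the orthogonal complement of m' inside M
  have hres : (B.restrict m').Nondegenerate := by
    refine (LinearMap.IsRefl.nondegenerate_iff_separatingLeft (B := B.restrict m')
      (fun x y h => hBrefl x y h)).2 ?_
    rintro ⟨x, hx⟩ h0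
    refine Subtype.ext (hnd x hx fun y hy => ?_)
    simpa using h0 ⟨y, hy⟩
  have hcomplm' := LinearMap.BilinForm.isCompl_orthogonal_of_restrict_nondegenerate
    (B := B) (W := m') hBrefl hres
  set m₂ : Submodule ℝ L := B.orthogonal m' ⊓ M with hm₂def
  have hsup : m' ⊔ m₂ = M := by
    have h2 := sup_inf_assoc_of_le (B.orthogonal m') hm'M
    rw [hcomplm'.sup_eq_top, top_inf_eq] at h2
    exact h2.symm
  have hm₂M : m₂ ≤ M := inf_le_right
  have horth12 : ∀ x ∈ m', ∀ y ∈ m₂, B x y = 0 := fun x hx y hy => hy.1 x hx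
  have hinv₂ : ∀ h ∈ H, ∀ x ∈ m₂, (⁅h, x⁆ : L) ∈ m₂ := by
    intro h hh x hx
    refine Submodule.mem_inf.2 ⟨?_, hHM_M h hh x hx.2⟩
    intro n hn
    show B n ⁅h, x⁆ = 0
    rw [hBsymm, ← lie_skew h x, map_neg, LinearMap.neg_apply, hBad x h n,
      hBsymm x ⁅h, n⁆]
    exact neg_eq_zero.2 (hx.1 ⁅h, n⁆ (hinv h hh n hn))
  have hnd₂ : ∀ x ∈ m₂, (∀ y ∈ m₂, B x y = 0) → x = 0 := by
    intro x hx h0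
    apply hBMnd x hx.2
    intro y hy
    rw [← hsup] at hy
    obtain ⟨a, ha, b, hb, rfl⟩ := Submodule.mem_sup.1 hy
    have e1 : B a x = 0 := hx.1 a ha
    rw [map_add, hBsymm x a, e1, h0 b hb, add_zero]
  have hdisj : m' ⊓ m₂ = ⊥ := by
    rw [eq_bot_iff]
    intro x hx
    rw [Submodule.mem_bot]
    refine hnd x hx.1 fun y hy => ?_
    rw [hBsymm]
    exact hx.2.1 y hy
  -- the subspaces K, K₁, K₂
  set K : Submodule ℝ L := Submodule.span ℝ {z : L | ∃ h ∈ H, ∃ x ∈ M, ⁅h, x⁆ = z}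
    with hKdef
  set K₁ : Submodule ℝ L := Submodule.span ℝ {z : L | ∃ h ∈ H, ∃ x ∈ m', ⁅h, x⁆ = z}
    with hK₁def
  set K₂ : Submodule ℝ L := Submodule.span ℝ {z : L | ∃ h ∈ H, ∃ x ∈ m₂, ⁅h, x⁆ = z}
    with hK₂def
  have hK₁m : K₁ ≤ m' := by
    apply Submodule.span_le.2
    rintro z ⟨h, hh, x, hx, rfl⟩
    exact hinv h hh x hx
  have hK₂m : K₂ ≤ m₂ := by
    apply Submodule.span_le.2
    rintro z ⟨h, hh, x, hx, rfl⟩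
    exact hinv₂ h hh x hx
  have hKle : K ≤ K₁ ⊔ K₂ := by
    apply Submodule.span_le.2
    rintro z ⟨h, hh, x, hx, rfl⟩
    rw [← hsup] at hx
    obtain ⟨a, ha, b, hb, rfl⟩ := Submodule.mem_sup.1 hx
    rw [lie_add]
    exact add_mem (Submodule.mem_sup_left (Submodule.subset_span ⟨h, hh, a, ha, rfl⟩))
      (Submodule.mem_sup_right (Submodule.subset_span ⟨h, hh, b, hb, rfl⟩))
  have hKM : K ≤ M := by
    apply Submodule.span_le.2
    rintro z ⟨h, hh, x, hx, rfl⟩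
    exact hHM_M h hh x hx
  have hHK : H ⊓ K = ⊥ := by
    rw [eq_bot_iff, ← hcompl.inf_eq_bot]
    exact inf_le_inf_left H hKM
  -- T := H ⊔ K contains all brackets
  set T : Submodule ℝ L := H ⊔ K with hTdef
  have hHH_T : ∀ h ∈ H, ∀ h' ∈ H, (⁅h, h'⁆ : L) ∈ T := by
    intro h hh
    have hcom : H ≤ Submodule.comap (LieAlgebra.ad ℝ L h : L →ₗ[ℝ] L) T := by
      rw [hHspan]
      apply Submodule.span_le.2
      rintro w ⟨a, ha, b, hb, rfl⟩
      simp only [SetLike.mem_coe, Submodule.mem_comap, LieAlgebra.ad_apply]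
      rw [leibniz_lie]
      refine add_mem (Submodule.mem_sup_left ?_) (Submodule.mem_sup_left ?_)
      · exact hMM_H _ (hHM_M h hh a ha) b hb
      · exact hMM_H a ha _ (hHM_M h hh b hb)
    intro h' hh'
    have := hcom hh'
    rwa [Submodule.mem_comap, LieAlgebra.ad_apply] at this
  have hbrT : ∀ y w : L, (⁅y, w⁆ : L) ∈ T := by
    intro y w
    obtain ⟨a, b, ha, hb, rfl⟩ :=
      Submodule.codisjoint_iff_exists_add_eq.mp hcompl.codisjoint y
    obtain ⟨c, d, hc, hd, rfl⟩ :=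
      Submodule.codisjoint_iff_exists_add_eq.mp hcompl.codisjoint w
    rw [add_lie, lie_add, lie_add]
    refine add_mem (add_mem (hHH_T a ha c hc) ?_) (add_mem ?_ ?_)
    · exact Submodule.mem_sup_right (Submodule.subset_span ⟨a, ha, d, hd, rfl⟩)
    · rw [← lie_skew b c]
      exact neg_mem (Submodule.mem_sup_right (Submodule.subset_span ⟨c, hc, b, hb, rfl⟩))
    · exact Submodule.mem_sup_left (hMM_H b hb d hd)
  have hTorth : B.orthogonal T ≤ (LieAlgebra.center ℝ L).toSubmodule := by
    intro x hx
    show x ∈ (LieAlgebra.center ℝ L).toSubmodule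
    rw [LieSubmodule.mem_toSubmodule]
    refine (LieModule.mem_maxTrivSubmodule ℝ L L x).2 fun y => ?_
    apply hBnd.1
    intro w
    have e2 : B ⁅y, w⁆ x = 0 := hx ⁅y, w⁆ (hbrT y w)
    rw [← lie_skew y x, map_neg, LinearMap.neg_apply, hBad x y w, hBsymm, e2, neg_zero]
  -- finrank bookkeeping
  have f1 : Module.finrank ℝ (B.orthogonal T) =
      Module.finrank ℝ L - Module.finrank ℝ T :=
    LinearMap.BilinForm.finrank_orthogonal hBnd T
  have f2 : Module.finrank ℝ (B.orthogonal T) ≤ 1 :=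
    hcenter ▸ Submodule.finrank_mono hTorth
  have fT : Module.finrank ℝ T + Module.finrank ℝ (H ⊓ K : Submodule ℝ L) =
      Module.finrank ℝ H + Module.finrank ℝ K :=
    Submodule.finrank_sup_add_finrank_inf_eq H K
  have fHK0 : Module.finrank ℝ (H ⊓ K : Submodule ℝ L) = 0 := by
    rw [hHK]; exact finrank_bot ℝ L
  have fHM : Module.finrank ℝ H + Module.finrank ℝ M = Module.finrank ℝ L :=
    Submodule.finrank_add_eq_of_isCompl hcompl
  have fM : Module.finrank ℝ M + Module.finrank ℝ (m' ⊓ m₂ : Submodule ℝ L) =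
      Module.finrank ℝ m' + Module.finrank ℝ m₂ := by
    rw [← hsup]; exact Submodule.finrank_sup_add_finrank_inf_eq m' m₂
  have fm0 : Module.finrank ℝ (m' ⊓ m₂ : Submodule ℝ L) = 0 := by
    rw [hdisj]; exact finrank_bot ℝ L
  have fK12 : Module.finrank ℝ (K₁ ⊔ K₂ : Submodule ℝ L) ≤
      Module.finrank ℝ K₁ + Module.finrank ℝ K₂ := by
    have := Submodule.finrank_sup_add_finrank_inf_eq K₁ K₂
    omega
  have fK : Module.finrank ℝ K ≤ Module.finrank ℝ K₁ + Module.finrank ℝ K₂ :=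
    le_trans (Submodule.finrank_mono hKle) fK12
  have fK₁ : Module.finrank ℝ K₁ ≤ Module.finrank ℝ m' := Submodule.finrank_mono hK₁m
  have fK₂ : Module.finrank ℝ K₂ ≤ Module.finrank ℝ m₂ := Submodule.finrank_mono hK₂m
  have fTle : Module.finrank ℝ T ≤ Module.finrank ℝ L := Submodule.finrank_le T
  have hcase : Module.finrank ℝ m' ≤ Module.finrank ℝ K₁ ∨
      Module.finrank ℝ m₂ ≤ Module.finrank ℝ K₂ := by omega
  rcases hcase with hcase | hcase
  · -- K₁ = m', hence m' = ⊥
    have hK₁eq : K₁ = m' := Submodule.eq_of_le_of_finrank_le hK₁m hcase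
    have horth21 : ∀ x ∈ m₂, ∀ y ∈ m', B x y = 0 := by
      intro x hx y hy
      rw [hBsymm]
      exact horth12 y hy x hx
    have hsup' : m₂ ⊔ m' = M := by rw [sup_comm]; exact hsup
    left
    exact aux_m2_eq_bot H M hHspan B hBad m₂ m' hsup' hinv₂ hinv horth21 hnd₂ hnd
      hK₁eq.symm.le
  · -- K₂ = m₂, hence m₂ = ⊥ and m' = M
    have hK₂eq : K₂ = m₂ := Submodule.eq_of_le_of_finrank_le hK₂m hcase
    have hbot : m₂ = ⊥ := aux_m2_eq_bot H M hHspan B hBad m' m₂ hsup hinv hinv₂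
      horth12 hnd hnd₂ hK₂eq.symm.le
    right
    rw [← hsup, hbot, sup_bot_eq]
end

section
/- Let (g,σ,B) be an indecomposable solvable symmetric triple with g = h ⊕ m, dim m > 1, whose center z := z(g) is one-dimensional, and suppose ⁅h, z^⊥ ∩ m⁆ ⊆ z, where z^⊥ is the B-orthogonal complement of z. Then the holonomy algebra h is abelian (⁅h,h⁆ = 0) and dim h = dim m − 2. -/
/-- For an indecomposable solvable symmetric triple with one-dimensional
center `z` satisfying `⁅h, z^⊥ ∩ m⁆ ⊆ z`, the holonomy algebra `h` is abelian and
`dim h = dim m − 2`. -/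
theorem case_III_holonomy_abelian_dim
    (L : Type*) [LieRing L] [LieAlgebra ℝ L] [FiniteDimensional ℝ L]
    [LieAlgebra.IsSolvable L]
    (σ : L →ₗ⁅ℝ⁆ L) (hσ : ∀ x, σ (σ x) = x)
    (H M : Submodule ℝ L)
    (hH : ∀ x, x ∈ H ↔ σ x = x)
    (hM : ∀ x, x ∈ M ↔ σ x = -x)
    (hcompl : IsCompl H M)
    (hHspan : H = Submodule.span ℝ {z : L | ∃ x ∈ M, ∃ y ∈ M, ⁅x, y⁆ = z})
    (B : LinearMap.BilinForm ℝ L)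
    (hBnd : B.Nondegenerate)
    (hBsymm : ∀ x y : L, B x y = B y x)
    (hBσ : ∀ x y : L, B (σ x) (σ y) = B x y)
    (hBad : ∀ x y z : L, B ⁅x, y⁆ z = B x ⁅y, z⁆)
    (hindec : ∀ m' : Submodule ℝ L, m' ≤ M →
      (∀ h ∈ H, ∀ x ∈ m', ⁅h, x⁆ ∈ m') →
      (∀ x ∈ m', (∀ y ∈ m', B x y = 0) → x = 0) →
      m' = ⊥ ∨ m' = M)
    (hdim : 1 < Module.finrank ℝ M)
    (hcenter : Module.finrank ℝ (LieAlgebra.center ℝ L).toSubmodule = 1)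
    -- ⁅h, z^⊥ ∩ m⁆ ⊆ z
    (hbr : ∀ h ∈ H, ∀ x ∈ B.orthogonal (LieAlgebra.center ℝ L).toSubmodule ⊓ M,
      ⁅h, x⁆ ∈ (LieAlgebra.center ℝ L).toSubmodule) :
    (∀ h₁ ∈ H, ∀ h₂ ∈ H, ⁅h₁, h₂⁆ = (0 : L)) ∧
    Module.finrank ℝ H = Module.finrank ℝ M - 2 := by
  classical
  set Z := (LieAlgebra.center ℝ L).toSubmodule with hZdef
  have hZmem : ∀ x : L, x ∈ Z ↔ ∀ y : L, ⁅y, x⁆ = 0 := by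
    intro x
    rw [hZdef, LieSubmodule.mem_toSubmodule]
    exact LieModule.mem_maxTrivSubmodule ℝ L L x
  -- H ⟂ M
  have hMO : ∀ x ∈ H, ∀ y ∈ M, B x y = 0 := by
    intro x hx y hy
    have h1 := hBσ x y
    rw [(hH x).1 hx, (hM y).1 hy, map_neg] at h1
    linarith
  -- decomposition of L into H ⊕ M parts
  have hdec : ∀ v : L, ∃ h ∈ H, ∃ m ∈ M, v = h + m := by
    intro v
    refine ⟨(1/2 : ℝ) • (v + σ v), ?_, (1/2 : ℝ) • (v - σ v), ?_, ?_⟩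
    · rw [hH, map_smul, map_add, hσ, add_comm]
    · rw [hM, map_smul, map_sub, hσ, ← smul_neg, neg_sub]
    · rw [← smul_add]
      rw [show v + σ v + (v - σ v) = (2:ℝ) • v by rw [two_smul]; abel]
      rw [smul_smul]; norm_num
  -- nondegeneracy on M
  have hBM : ∀ x ∈ M, (∀ y ∈ M, B x y = 0) → x = 0 := by
    intro x hx hxy
    apply hBnd.1
    intro v
    obtain ⟨h, hh, m, hm, rfl⟩ := hdec v
    rw [map_add]
    rw [hxy m hm, hBsymm x h, hMO h hh x hx, add_zero]
  -- nondegeneracy on H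
  have hBH : ∀ x ∈ H, (∀ y ∈ H, B x y = 0) → x = 0 := by
    intro x hx hxy
    apply hBnd.1
    intro v
    obtain ⟨h, hh, m, hm, rfl⟩ := hdec v
    rw [map_add]
    rw [hxy h hh, hMO x hx m hm, add_zero]
  -- bracket stability
  have hHM : ∀ a ∈ H, ∀ x ∈ M, ⁅a, x⁆ ∈ M := by
    intro a ha x hx
    rw [hM, LieHom.map_lie, (hH a).1 ha, (hM x).1 hx, lie_neg]
  have hMM : ∀ x ∈ M, ∀ y ∈ M, ⁅x, y⁆ ∈ H := by
    intro x hx y hy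
    rw [hH, LieHom.map_lie, (hM x).1 hx, (hM y).1 hy, neg_lie, lie_neg, neg_neg]
  have hHH : ∀ a ∈ H, ∀ b ∈ H, ⁅a, b⁆ ∈ H := by
    intro a ha b hb
    rw [hH, LieHom.map_lie, (hH a).1 ha, (hH b).1 hb]
  -- the central element ζ
  have hZnt : Nontrivial Z := by
    apply Module.nontrivial_of_finrank_pos (R := ℝ)
    rw [hcenter]; norm_num
  obtain ⟨z0, hz0⟩ := exists_ne (0 : Z)
  have hζmem : (z0 : L) ∈ Z := z0.2
  have hζne : (z0 : L) ≠ 0 := fun h => hz0 (Subtype.ext h)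
  set ζ : L := (z0 : L) with hζdef
  have hζrep : ∀ u ∈ Z, ∃ c : ℝ, u = c • ζ := by
    intro u hu
    have h1 := (finrank_eq_one_iff_of_nonzero' (V := Z) z0 (by
      intro h; exact hz0 h)).1 hcenter ⟨u, hu⟩
    obtain ⟨c, hc⟩ := h1
    exact ⟨c, by have := congrArg (Subtype.val) hc; simpa using this.symm⟩
  have hζcen : ∀ y : L, ⁅y, ζ⁆ = 0 := (hZmem ζ).1 hζmem
  have hζcen' : ∀ y : L, ⁅ζ, y⁆ = 0 := by
    intro y; rw [← lie_skew, hζcen, neg_zero]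
  -- ζ ∈ M
  have hζM : ζ ∈ M := by
    have hσζZ : σ ζ ∈ Z := by
      rw [hZmem]
      intro y
      have h1 : σ ⁅σ y, ζ⁆ = 0 := by rw [hζcen]; exact σ.map_zero
      rw [LieHom.map_lie, hσ] at h1
      exact h1
    obtain ⟨c, hc⟩ := hζrep (σ ζ) hσζZ
    have hcc : (c * c) • ζ = ζ := by
      have := hσ ζ
      rw [hc, map_smul, hc, smul_smul] at this
      exact this
    have hc2 : c = 1 ∨ c = -1 := by
      have h3 : (c * c - 1) • ζ = 0 := by
        rw [sub_smul, one_smul, hcc, sub_self]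
      rcases smul_eq_zero.1 h3 with h | h
      · have : (c - 1) * (c + 1) = 0 := by ring_nf; linarith
        rcases mul_eq_zero.1 this with h | h
        · left; linarith
        · right; linarith
      · exact absurd h hζne
    rcases hc2 with h | h
    · -- σ ζ = ζ : contradiction, ζ would be orthogonal to everything
      exfalso
      rw [h, one_smul] at hc
      have hζH : ζ ∈ H := (hH ζ).2 hc
      have hHker : H ≤ LinearMap.ker (B ζ) := by
        rw [hHspan]
        rw [Submodule.span_le]
        rintro _ ⟨x, hx, y, hy, rfl⟩
        simp only [SetLike.mem_coe, LinearMap.mem_ker]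
        rw [hBsymm, hBad, hζcen, map_zero]
      apply hζne
      apply hBnd.1
      intro v
      obtain ⟨h', hh', m, hm, rfl⟩ := hdec v
      rw [map_add, hMO ζ hζH m hm]
      have := hHker hh'
      rw [LinearMap.mem_ker] at this
      rw [this, add_zero]
    · rw [h] at hc
      rw [hM, hc, neg_smul, one_smul]
  -- B ζ ζ = 0
  have hζζ : B ζ ζ = 0 := by
    by_contra hne
    have := hindec (Submodule.span ℝ {ζ}) ?_ ?_ ?_
    · rcases this with h | h
      · exact hζne (by
          have : ζ ∈ (⊥ : Submodule ℝ L) := h ▸ Submodule.mem_span_singleton_self ζ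
          simpa using this)
      · have := finrank_span_singleton (K := ℝ) hζne
        rw [h] at this
        omega
    · rw [Submodule.span_le, Set.singleton_subset_iff]; exact hζM
    · intro a ha x hx
      obtain ⟨c, rfl⟩ := Submodule.mem_span_singleton.1 hx
      rw [lie_smul, hζcen a, smul_zero]
      exact Submodule.zero_mem _
    · intro x hx hxy
      obtain ⟨c, rfl⟩ := Submodule.mem_span_singleton.1 hx
      have := hxy ζ (Submodule.mem_span_singleton_self ζ)
      rw [map_smul, LinearMap.smul_apply, smul_eq_mul] at this
      rcases mul_eq_zero.1 this with h | h
      · rw [h, zero_smul]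
      · exact absurd h hne
  -- the element w with B ζ w = 1
  obtain ⟨w, hwM, hζw⟩ : ∃ w ∈ M, B ζ w = 1 := by
    have : ∃ w0 ∈ M, B ζ w0 ≠ 0 := by
      by_contra hcon
      push_neg at hcon
      exact hζne (hBM ζ hζM hcon)
    obtain ⟨w0, hw0M, hw0⟩ := this
    refine ⟨(B ζ w0)⁻¹ • w0, Submodule.smul_mem _ _ hw0M, ?_⟩
    rw [map_smul, smul_eq_mul, inv_mul_cancel₀ hw0]
  have hwζ : B w ζ = 1 := by rw [hBsymm]; exact hζw
  -- bracket with K := z^⊥ ∩ M lands in ℝζ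
  have hbr' : ∀ a ∈ H, ∀ x ∈ M, B ζ x = 0 → ∃ c : ℝ, ⁅a, x⁆ = c • ζ := by
    intro a ha x hx hζx
    have hxK : x ∈ B.orthogonal Z ⊓ M := by
      rw [Submodule.mem_inf]
      refine ⟨?_, hx⟩
      rw [LinearMap.BilinForm.mem_orthogonal_iff]
      intro n hn
      obtain ⟨c, rfl⟩ := hζrep n hn
      rw [map_smul, LinearMap.smul_apply, hζx,
        smul_zero]
    obtain ⟨c, hc⟩ := hζrep ⁅a, x⁆ (hbr a ha x hxK)
    exact ⟨c, hc⟩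
  -- ⁅a, w⁆ properties
  have hawM : ∀ a ∈ H, ⁅a, w⁆ ∈ M := fun a ha => hHM a ha w hwM
  have hζaw : ∀ a : L, B ζ ⁅a, w⁆ = 0 := by
    intro a
    rw [← hBad ζ a w, hζcen' a, map_zero, LinearMap.zero_apply]
  have hwaw : ∀ a : L, B w ⁅a, w⁆ = 0 := by
    intro a
    have h1 : B ⁅w, a⁆ w = B w ⁅a, w⁆ := hBad w a w
    have h2 : B ⁅w, a⁆ w = - B ⁅a, w⁆ w := by
      rw [← lie_skew a w, map_neg, LinearMap.neg_apply, neg_neg]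
    rw [h2, hBsymm] at h1
    linarith
  -- decomposition of M
  have hMdec : ∀ x ∈ M, ∃ c₁ c₂ : ℝ, ∃ e, e ∈ M ∧ B ζ e = 0 ∧ B w e = 0 ∧
      x = c₁ • ζ + c₂ • w + e := by
    intro x hx
    refine ⟨B w x - (B ζ x) * (B w w), B ζ x,
      x - (B w x - (B ζ x) * (B w w)) • ζ - (B ζ x) • w, ?_, ?_, ?_, by abel⟩
    · exact Submodule.sub_mem _ (Submodule.sub_mem _ hx
        (Submodule.smul_mem _ _ hζM)) (Submodule.smul_mem _ _ hwM)
    · rw [map_sub, map_sub, map_smul, map_smul, smul_eq_mul, smul_eq_mul, hζζ, hζw]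
      ring
    · rw [map_sub, map_sub, map_smul, map_smul, smul_eq_mul, smul_eq_mul, hwζ]
      ring
  -- key killing lemma
  have hkill : ∀ a ∈ H, ⁅a, w⁆ = 0 → a = 0 := by
    intro a ha haw
    -- step 1 : a kills z^⊥ ∩ M
    have hstep1 : ∀ x ∈ M, B ζ x = 0 → ⁅a, x⁆ = 0 := by
      intro x hx hζx
      obtain ⟨c, hc⟩ := hbr' a ha x hx hζx
      have hcval : B ⁅a, x⁆ w = c := by
        rw [hc, map_smul, LinearMap.smul_apply, hζw, smul_eq_mul, mul_one]
      have hczero : B ⁅a, x⁆ w = 0 := by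
        rw [← lie_skew a x, map_neg, LinearMap.neg_apply, hBad, haw, map_zero,
          neg_zero]
      rw [hc, show c = 0 by rw [← hcval, hczero], zero_smul]
    -- step 2 : a kills all of M
    have hstep2 : ∀ x ∈ M, ⁅a, x⁆ = 0 := by
      intro x hx
      obtain ⟨c₁, c₂, e, heM, hζe, hwe, rfl⟩ := hMdec x hx
      rw [lie_add, lie_add, lie_smul, lie_smul, hζcen a, haw,
        hstep1 e heM hζe, smul_zero, smul_zero, add_zero, add_zero]
    -- step 3 : a kills all of H
    have hstep3 : ∀ b ∈ H, ⁅a, b⁆ = 0 := by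
      intro b hb
      have : H ≤ LinearMap.ker (LieAlgebra.ad ℝ L a) := by
        rw [hHspan, Submodule.span_le]
        rintro _ ⟨x, hx, y, hy, rfl⟩
        simp only [SetLike.mem_coe, LinearMap.mem_ker, LieAlgebra.ad_apply]
        rw [leibniz_lie, hstep2 x hx, hstep2 y hy, zero_lie, lie_zero, add_zero]
      have := this hb
      rw [LinearMap.mem_ker, LieAlgebra.ad_apply] at this
      exact this
    -- a is central
    have haZ : a ∈ Z := by
      rw [hZmem]
      intro y
      obtain ⟨h', hh', m, hm, rfl⟩ := hdec y
      rw [add_lie, ← lie_skew h' a, hstep3 h' hh', ← lie_skew m a, hstep2 m hm,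
        neg_zero, add_zero]
    obtain ⟨c, hc⟩ := hζrep a haZ
    have hσa : σ a = a := (hH a).1 ha
    have hσζ : σ ζ = -ζ := (hM ζ).1 hζM
    rw [hc, map_smul, hσζ, smul_neg] at hσa
    have : (2 * c) • ζ = 0 := by
      have h3 : c • ζ + c • ζ = 0 := neg_eq_iff_add_eq_zero.1 hσa
      rw [two_mul, add_smul]
      exact h3
    rcases smul_eq_zero.1 this with h | h
    · rw [hc, show c = 0 by linarith, zero_smul]
    · exact absurd h hζne
  -- Part 1 : H is abelian
  have habelian : ∀ h₁ ∈ H, ∀ h₂ ∈ H, ⁅h₁, h₂⁆ = (0 : L) := by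
    intro h₁ hh₁ h₂ hh₂
    set c := ⁅h₁, h₂⁆ with hcdef
    have hcH : c ∈ H := hHH h₁ hh₁ h₂ hh₂
    -- c kills z^⊥ ∩ M
    have hcK : ∀ x ∈ M, B ζ x = 0 → ⁅c, x⁆ = 0 := by
      intro x hx hζx
      rw [hcdef, lie_lie]
      obtain ⟨c₂, hc₂⟩ := hbr' h₂ hh₂ x hx hζx
      obtain ⟨c₁, hc₁⟩ := hbr' h₁ hh₁ x hx hζx
      rw [hc₂, hc₁, lie_smul, lie_smul, hζcen h₁, hζcen h₂, smul_zero, smul_zero,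
        sub_self]
    -- ⁅c, w⁆ is orthogonal to M
    have hcwM : ⁅c, w⁆ ∈ M := hHM c hcH w hwM
    have hcw0 : ⁅c, w⁆ = 0 := by
      apply hBM _ hcwM
      intro y hy
      obtain ⟨c₁, c₂, e, heM, hζe, hwe, rfl⟩ := hMdec y hy
      rw [map_add, map_add, map_smul, map_smul, smul_eq_mul, smul_eq_mul]
      rw [hBsymm _ ζ, hζaw c, hBsymm _ w, hwaw c]
      have : B ⁅c, w⁆ e = 0 := by
        rw [← lie_skew c w, map_neg, LinearMap.neg_apply, hBad,
          hcK e heM hζe, map_zero, neg_zero]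
      rw [this]
      ring
    exact hkill c hcH hcw0
  refine ⟨habelian, ?_⟩
  -- Part 2 : dimension count
  -- the linear map a ↦ ⁅a, w⁆
  set f : L →ₗ[ℝ] L := -(LieAlgebra.ad ℝ L w) with hfdef
  have hfapp : ∀ a : L, f a = ⁅a, w⁆ := by
    intro a
    rw [hfdef]
    simp only [LinearMap.neg_apply, LieAlgebra.ad_apply]
    rw [← lie_skew a w]
  -- the subspace E
  set E : Submodule ℝ L := (LinearMap.ker (B ζ) ⊓ LinearMap.ker (B w)) ⊓ M with hEdef
  have hEmem : ∀ x : L, x ∈ E ↔ B ζ x = 0 ∧ B w x = 0 ∧ x ∈ M := by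
    intro x
    rw [hEdef]
    simp only [Submodule.mem_inf, LinearMap.mem_ker]
    tauto
  have hEM : E ≤ M := fun x hx => ((hEmem x).1 hx).2.2
  have hfHE : ∀ a ∈ H, f a ∈ E := by
    intro a ha
    rw [hfapp, hEmem]
    exact ⟨hζaw a, hwaw a, hawM a ha⟩
  -- Φ : H → E injective
  let Φ : H →ₗ[ℝ] E := f.restrict hfHE
  have hΦinj : Function.Injective Φ := by
    rw [injective_iff_map_eq_zero]
    intro a haeq
    have : f (a : L) = 0 := by
      have := congrArg (Subtype.val) haeq
      exact this
    rw [hfapp] at this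
    exact Subtype.ext (hkill a a.2 this)
  have hdim1 : Module.finrank ℝ H ≤ Module.finrank ℝ E :=
    LinearMap.finrank_le_finrank_of_injective hΦinj
  -- θ : E → Dual H injective
  let θ : E →ₗ[ℝ] (H →ₗ[ℝ] ℝ) :=
  { toFun := fun e => (B (e : L)).comp (f.comp H.subtype)
    map_add' := by
      intro e e'
      ext b
      simp [LinearMap.add_apply]
    map_smul' := by
      intro c e
      ext b
      simp }
  have hθinj : Function.Injective θ := by
    rw [injective_iff_map_eq_zero]
    intro e heq
    have hy : ∀ b ∈ H, B (e : L) ⁅b, w⁆ = 0 := by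
      intro b hb
      have := congrFun (congrArg (DFunLike.coe) heq) ⟨b, hb⟩
      simp only [LinearMap.comp_apply, LinearMap.zero_apply] at this
      rw [← hfapp]
      exact this
    obtain ⟨hζe, hwe, heM⟩ := (hEmem (e : L)).1 e.2
    -- e is central
    have heZ : (e : L) ∈ Z := by
      rw [hZmem]
      intro y
      obtain ⟨h', hh', m, hm, rfl⟩ := hdec y
      have h1 : ⁅h', (e : L)⁆ = 0 := by
        obtain ⟨c, hc⟩ := hbr' h' hh' (e : L) heM hζe
        have hcval : B ⁅h', (e : L)⁆ w = c := by
          rw [hc, map_smul, LinearMap.smul_apply, hζw, smul_eq_mul, mul_one]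
        have hczero : B ⁅h', (e : L)⁆ w = 0 := by
          rw [← lie_skew h' (e : L), map_neg, LinearMap.neg_apply, hBad,
            hy h' hh', neg_zero]
        rw [hc, show c = 0 by rw [← hcval, hczero], zero_smul]
      have h2 : ⁅m, (e : L)⁆ = 0 := by
        apply hBH _ (hMM m hm (e : L) heM)
        intro b hb
        have hthis : B ⁅m, (e : L)⁆ b = B (e : L) ⁅b, m⁆ := by
          rw [← lie_skew m (e : L), map_neg, LinearMap.neg_apply, hBad]
          rw [show ⁅m, b⁆ = -⁅b, m⁆ from by rw [← lie_skew b m, neg_neg]]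
          rw [map_neg, neg_neg]
        rw [hthis]
        obtain ⟨c₁, c₂, e', he'M, hζe', hwe', rfl⟩ := hMdec m hm
        obtain ⟨c', hc'⟩ := hbr' b hb e' he'M hζe'
        rw [lie_add, lie_add, lie_smul, lie_smul, hζcen b, hc', smul_zero,
          zero_add]
        rw [map_add, map_smul, map_smul, smul_eq_mul, smul_eq_mul, hy b hb,
          hBsymm (e : L) ζ, hζe]
        ring
      rw [add_lie, h1, h2, add_zero]
    obtain ⟨c, hc⟩ := hζrep (e : L) heZ
    have : c = 0 := by
      have := hwe
      rw [hc, map_smul, smul_eq_mul, hwζ, mul_one] at this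
      exact this
    exact Subtype.ext (by simp [hc, this])
  have hdim2 : Module.finrank ℝ E ≤ Module.finrank ℝ H := by
    have h1 : Module.finrank ℝ E ≤ Module.finrank ℝ (Module.Dual ℝ H) :=
      LinearMap.finrank_le_finrank_of_injective hθinj
    rwa [Subspace.dual_finrank_eq] at h1
  have hdimHE : Module.finrank ℝ H = Module.finrank ℝ E := le_antisymm hdim1 hdim2
  -- finrank E = finrank M - 2
  set ψ : M →ₗ[ℝ] ℝ × ℝ :=
    LinearMap.prod ((B ζ).comp M.subtype) ((B w).comp M.subtype) with hψdef
  have hψker : LinearMap.ker ψ = E.comap M.subtype := by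
    ext x
    simp only [LinearMap.mem_ker, hψdef, LinearMap.prod_apply, Function.prod,
      LinearMap.comp_apply, Submodule.coe_subtype, Submodule.mem_comap, hEmem,
      Prod.mk_eq_zero]
    exact ⟨fun ⟨h1, h2⟩ => ⟨h1, h2, x.2⟩, fun ⟨h1, h2, _⟩ => ⟨h1, h2⟩⟩
  have hψsurj : Function.Surjective ψ := by
    rintro ⟨a, b⟩
    refine ⟨a • ⟨w, hwM⟩ + (b - a * B w w) • ⟨ζ, hζM⟩, ?_⟩
    simp only [hψdef, LinearMap.prod_apply, Function.prod, LinearMap.comp_apply,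
      Submodule.coe_subtype, Submodule.coe_add, SetLike.val_smul, map_add,
      map_smul, smul_eq_mul]
    rw [hζw, hζζ, hwζ]
    simp only [Prod.smul_mk, Prod.mk_add_mk, smul_eq_mul, Prod.mk.injEq]
    constructor <;> ring
  have hrank : Module.finrank ℝ (LinearMap.ker ψ) + 2 = Module.finrank ℝ M := by
    have := LinearMap.finrank_range_add_finrank_ker ψ
    rw [LinearMap.range_eq_top.2 hψsurj] at this
    rw [finrank_top] at this
    have h2 : Module.finrank ℝ (ℝ × ℝ) = 2 := by
      rw [Module.finrank_prod, Module.finrank_self]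
    rw [h2] at this
    omega
  have hEeq : Module.finrank ℝ E = Module.finrank ℝ (LinearMap.ker ψ) := by
    rw [hψker]
    exact (Submodule.comapSubtypeEquivOfLe hEM).finrank_eq.symm
  rw [hdimHE, hEeq]
  omega
end
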